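/- Let (X,d,μ) be an RD-space with parameters κ≤n and μ(X)=∞, and let K be a strongly singular generalized kernel on X with parameters (m,ε,α,p₀). Then there exists C>0 such that for all z,u₀∈X with 0<d(z,u₀)<1, every x∈X with d(x,u₀) ≤ 2d(z,u₀)^α, and all f₁,…,f_m∈L^{p₀'}_{loc}(X), ∫_{{ȳ∈X^m : ρ(ȳ,ū₀) ≥ 2d(z,u₀)^α}} |K(z,y₁,…,y_m) − K(u₀,y₁,…,y_m)| ∏_{j=1}^m |f_j(y_j)| dμ(y₁)⋯dμ(y_m) ≤ C·𝓜_{p₀'}(f⃗)(x), where ū₀=(u₀,…,u₀) and ρ(ȳ,ū₀)=max_{1≤j≤m} d(y_j,u₀). -/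

import Mathlib

open MeasureTheory Metric ENNReal Set Bornology
open scoped BigOperators NNReal ENNReal

noncomputable section
set_option maxHeartbeats 1000000


/-- One-sided Hölder inequality for `lintegral`: only the second factor needs to
be measurable (and finite). -/
theorem holder_one_side {Y : Type*} [MeasurableSpace Y] (ν : Measure Y) {p q : ℝ}
    (hpq : Real.HolderConjugate p q) (f g : Y → ℝ≥0∞) (hg : Measurable g)
    (hgt : ∀ y, g y ≠ ⊤) :
    ∫⁻ y, f y * g y ∂ν ≤ (∫⁻ y, f y ^ p ∂ν) ^ (1 / p) * (∫⁻ y, g y ^ q ∂ν) ^ (1 / q) := by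
  obtain ⟨φ, hφm, hφle, hφeq⟩ := exists_measurable_le_lintegral_eq ν (fun y => f y * g y)
  set f' : Y → ℝ≥0∞ := fun y => φ y * (g y)⁻¹ with hf'
  have hf'm : Measurable f' := hφm.mul hg.inv
  have hkey : ∀ y, f' y * g y = φ y ∧ f' y ≤ f y := by
    intro y
    rcases eq_or_ne (g y) 0 with h0 | h0
    · have hφ0 : φ y = 0 := le_antisymm (by simpa [h0] using hφle y) (zero_le)
      constructor
      · simp [hf', h0, hφ0]
      · simp [hf', hφ0]
    · constructor
      · have hginv : (g y)⁻¹ * g y = 1 := ENNReal.inv_mul_cancel h0 (hgt y)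
        calc f' y * g y = φ y * ((g y)⁻¹ * g y) := by rw [hf']; ring
          _ = φ y := by rw [hginv, mul_one]
      · have hle : φ y * (g y)⁻¹ ≤ f y * g y * (g y)⁻¹ := mul_le_mul_left (hφle y) _
        calc f' y = φ y * (g y)⁻¹ := rfl
          _ ≤ f y * g y * (g y)⁻¹ := hle
          _ = f y * (g y * (g y)⁻¹) := by ring
          _ = f y := by rw [ENNReal.mul_inv_cancel h0 (hgt y), mul_one]
  calc ∫⁻ y, f y * g y ∂ν = ∫⁻ y, φ y ∂ν := hφeq
    _ = ∫⁻ y, (f' * g) y ∂ν := lintegral_congr fun y => ((hkey y).1).symm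
    _ ≤ (∫⁻ y, f' y ^ p ∂ν) ^ (1 / p) * (∫⁻ y, g y ^ q ∂ν) ^ (1 / q) :=
        ENNReal.lintegral_mul_le_Lp_mul_Lq ν hpq hf'm.aemeasurable hg.aemeasurable
    _ ≤ (∫⁻ y, f y ^ p ∂ν) ^ (1 / p) * (∫⁻ y, g y ^ q ∂ν) ^ (1 / q) := by
        refine mul_le_mul_left (ENNReal.rpow_le_rpow (lintegral_mono fun y => ?_)
          (one_div_nonneg.mpr hpq.nonneg)) _
        exact ENNReal.rpow_le_rpow (hkey y).2 hpq.nonneg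

/-- Tonelli for a product of coordinate functions over a finite power measure. -/
theorem lintegral_pi_prod {Z : Type*} [MeasurableSpace Z] (ν : Measure Z) [SigmaFinite ν] :
    ∀ (n : ℕ) (g : Fin n → Z → ℝ≥0∞), (∀ i, Measurable (g i)) →
      ∫⁻ y : Fin n → Z, ∏ i, g i (y i) ∂(Measure.pi fun _ => ν) = ∏ i, ∫⁻ t, g i t ∂ν := by
  intro n
  induction n with
  | zero =>
    intro g hg
    simp [lintegral_const, Measure.pi_univ]
  | succ n ih =>
    intro g hg
    have hmp := measurePreserving_piFinSuccAbove (fun _ : Fin (n + 1) => ν) 0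
    have hFm : Measurable fun y : Fin (n + 1) → Z => ∏ i, g i (y i) :=
      Finset.measurable_prod _ fun i _ => (hg i).comp (measurable_pi_apply i)
    calc ∫⁻ y : Fin (n + 1) → Z, ∏ i, g i (y i) ∂(Measure.pi fun _ => ν)
        = ∫⁻ z : Z × (Fin n → Z), g 0 z.1 * ∏ i : Fin n, g i.succ (z.2 i)
            ∂(ν.prod (Measure.pi fun _ => ν)) := by
          rw [← (hmp.symm (MeasurableEquiv.piFinSuccAbove (fun _ : Fin (n+1) => Z) 0)).lintegral_comp hFm]
          congr 1
          funext z
          rw [Fin.prod_univ_succ]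
          simp [MeasurableEquiv.piFinSuccAbove_symm_apply, Fin.insertNthEquiv,
            Fin.insertNth_zero, Fin.zero_succAbove, Fin.cons_succ, Fin.cons_zero]
      _ = (∫⁻ t, g 0 t ∂ν) * ∫⁻ y : Fin n → Z, ∏ i : Fin n, g i.succ (y i)
            ∂(Measure.pi fun _ => ν) := by
          exact lintegral_prod_mul (hg 0).aemeasurable
            (Finset.measurable_prod _ fun (i : Fin n) _ =>
              (hg i.succ).comp (measurable_pi_apply i)).aemeasurable
      _ = ∏ i, ∫⁻ t, g i t ∂ν := by
          rw [ih (fun i => g i.succ) (fun i => hg i.succ), Fin.prod_univ_succ]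


section Defs

variable {X : Type*} [MetricSpace X] [MeasurableSpace X] [BorelSpace X]

/-- Weighted `L^p` norm `(∫ |f|^p w dμ)^{1/p}` of a real-valued function. -/
def lpNormW (μ : Measure X) (p : ℝ) (w : X → ℝ) (f : X → ℝ) : ℝ≥0∞ :=
  (∫⁻ x, ENNReal.ofReal (|f x| ^ p * w x) ∂μ) ^ (1 / p)

/-- Weighted `L^p` norm of an `ℝ≥0∞`-valued function. -/
def lpNormW' (μ : Measure X) (p : ℝ) (w : X → ℝ) (g : X → ℝ≥0∞) : ℝ≥0∞ :=
  (∫⁻ x, g x ^ p * ENNReal.ofReal (w x) ∂μ) ^ (1 / p)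

/-- Weighted weak `L^p` (Lorentz `L^{p,∞}`) norm of a real-valued function. -/
def weakLpNormW (μ : Measure X) (p : ℝ) (w : X → ℝ) (f : X → ℝ) : ℝ≥0∞ :=
  ⨆ (t : ℝ) (_ : 0 < t),
    ENNReal.ofReal t * (∫⁻ x in {y | t < |f y|}, ENNReal.ofReal (w x) ∂μ) ^ (1 / p)

/-- Weighted weak `L^p` norm of an `ℝ≥0∞`-valued function. -/
def weakLpNormW' (μ : Measure X) (p : ℝ) (w : X → ℝ) (g : X → ℝ≥0∞) : ℝ≥0∞ :=
  ⨆ (t : ℝ) (_ : 0 < t),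
    ENNReal.ofReal t * (∫⁻ x in {y | ENNReal.ofReal t < g y}, ENNReal.ofReal (w x) ∂μ) ^ (1 / p)

/-- The BMO seminorm `sup_B μ(B)⁻¹ ∫_B |f - f_B| dμ` (supremum over balls). -/
def bmoNorm (μ : Measure X) (f : X → ℝ) : ℝ≥0∞ :=
  ⨆ (c : X) (r : ℝ) (_ : 0 < r),
    (μ (ball c r))⁻¹ *
      ∫⁻ y in ball c r, ENNReal.ofReal |f y - ⨍ z in ball c r, f z ∂μ| ∂μ

/-- Membership in `BMO(X)`. -/
def MemBMO (μ : Measure X) (f : X → ℝ) : Prop :=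
  LocallyIntegrable f μ ∧ bmoNorm μ f < ⊤

/-- The Hardy–Littlewood maximal function. -/
def hlMaximal (μ : Measure X) (f : X → ℝ) (x : X) : ℝ≥0∞ :=
  ⨆ (c : X) (r : ℝ) (_ : 0 < r) (_ : x ∈ ball c r),
    (μ (ball c r))⁻¹ * ∫⁻ y in ball c r, ENNReal.ofReal |f y| ∂μ

/-- The sharp maximal function `M^♯ f`. -/
def sharpMaximal (μ : Measure X) (f : X → ℝ) (x : X) : ℝ≥0∞ :=
  ⨆ (c : X) (r : ℝ) (_ : 0 < r) (_ : x ∈ ball c r),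
    (μ (ball c r))⁻¹ *
      ∫⁻ y in ball c r, ENNReal.ofReal |f y - ⨍ z in ball c r, f z ∂μ| ∂μ

/-- `M_δ^♯ f = (M^♯(|f|^δ))^{1/δ}`. -/
def sharpMaximalPow (μ : Measure X) (δ : ℝ) (f : X → ℝ) (x : X) : ℝ≥0∞ :=
  (sharpMaximal μ (fun y => |f y| ^ δ) x) ^ (1 / δ)

/-- The multilinear maximal operator `𝓜(f⃗)`. -/
def multiMaximal (μ : Measure X) {m : ℕ} (f : Fin m → X → ℝ) (x : X) : ℝ≥0∞ :=
  ⨆ (c : X) (r : ℝ) (_ : 0 < r) (_ : x ∈ ball c r),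
    ∏ j, ((μ (ball c r))⁻¹ * ∫⁻ y in ball c r, ENNReal.ofReal |f j y| ∂μ)

/-- `𝓜_s(f⃗) = (𝓜(|f₁|^s,…,|f_m|^s))^{1/s}`. -/
def multiMaximalPow (μ : Measure X) {m : ℕ} (s : ℝ) (f : Fin m → X → ℝ) (x : X) : ℝ≥0∞ :=
  (multiMaximal μ (fun j y => |f j y| ^ s) x) ^ (1 / s)

/-- The Muckenhoupt `A₁` condition on a metric measure space. -/
def MemA1 (μ : Measure X) (w : X → ℝ) : Prop :=
  (∀ x, 0 ≤ w x) ∧ LocallyIntegrable w μ ∧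
  ∃ C : ℝ, 0 < C ∧ ∀ (c : X) (r : ℝ), 0 < r →
    (μ (ball c r))⁻¹ * (∫⁻ y in ball c r, ENNReal.ofReal (w y) ∂μ) ≤
      ENNReal.ofReal C * essInf (fun y => ENNReal.ofReal (w y)) (μ.restrict (ball c r))

/-- The Muckenhoupt `A_p` condition, `1 < p < ∞`, on a metric measure space. -/
def MemAp (μ : Measure X) (p : ℝ) (w : X → ℝ) : Prop :=
  (∀ x, 0 ≤ w x) ∧ LocallyIntegrable w μ ∧
  ∃ C : ℝ, 0 < C ∧ ∀ (c : X) (r : ℝ), 0 < r →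
    ((μ (ball c r))⁻¹ * ∫⁻ y in ball c r, ENNReal.ofReal (w y) ∂μ) *
      ((μ (ball c r))⁻¹ *
        ∫⁻ y in ball c r, ENNReal.ofReal (w y ^ (-(1 / (p - 1)))) ∂μ) ^ (p - 1) ≤
      ENNReal.ofReal C

/-- `A_∞ = ⋃_{p ≥ 1} A_p`. -/
def MemAinf (μ : Measure X) (w : X → ℝ) : Prop :=
  MemA1 μ w ∨ ∃ p : ℝ, 1 < p ∧ MemAp μ p w

/-- The `j`-th factor in the multilinear `A_{p⃗}` condition over a ball `B`:
`((μ B)⁻¹ ∫_B w^{1-p'} dμ)^{1/p'}`, read as `(ess inf_B w)⁻¹` when `p = 1`. -/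
def apFactor (μ : Measure X) (pj : ℝ) (wj : X → ℝ) (B : Set X) : ℝ≥0∞ :=
  if pj = 1 then (essInf (fun y => ENNReal.ofReal (wj y)) (μ.restrict B))⁻¹
  else ((μ B)⁻¹ * ∫⁻ y in B, ENNReal.ofReal (wj y ^ (-(1 / (pj - 1)))) ∂μ) ^ (1 - 1 / pj)

/-- The multiple-weight condition `A_{p⃗}` of Lerner–Grafakos type on a metric
measure space, where `1/p = ∑ 1/p_j` and `ν_{w⃗} = ∏ w_j^{p/p_j}`. -/
def MemAVec (μ : Measure X) {m : ℕ} (p : Fin m → ℝ) (w : Fin m → X → ℝ) : Prop :=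
  (∀ j x, 0 ≤ w j x) ∧ (∀ j, LocallyIntegrable (w j) μ) ∧
  ∃ C : ℝ, 0 < C ∧ ∀ (c : X) (r : ℝ), 0 < r →
    ((μ (ball c r))⁻¹ *
        ∫⁻ y in ball c r,
          ENNReal.ofReal (∏ j, w j y ^ ((∑ i, 1 / p i)⁻¹ / p j)) ∂μ) ^ (∑ i, 1 / p i) *
      ∏ j, apFactor μ (p j) (w j) (ball c r) ≤ ENNReal.ofReal C

/-- Generalized weighted Morrey norm `sup_B (φ(w(B))⁻¹ ∫_B |f|^p w dμ)^{1/p}`. -/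
def morreyNormW (μ : Measure X) (p : ℝ) (φ : ℝ → ℝ) (w : X → ℝ) (f : X → ℝ) : ℝ≥0∞ :=
  ⨆ (c : X) (r : ℝ) (_ : 0 < r),
    ((ENNReal.ofReal
        (φ (∫⁻ y in ball c r, ENNReal.ofReal (w y) ∂μ).toReal))⁻¹ *
      ∫⁻ y in ball c r, ENNReal.ofReal (|f y| ^ p * w y) ∂μ) ^ (1 / p)

/-- Generalized weighted Morrey norm of an `ℝ≥0∞`-valued function. -/
def morreyNormW' (μ : Measure X) (p : ℝ) (φ : ℝ → ℝ) (w : X → ℝ) (g : X → ℝ≥0∞) : ℝ≥0∞ :=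
  ⨆ (c : X) (r : ℝ) (_ : 0 < r),
    ((ENNReal.ofReal
        (φ (∫⁻ y in ball c r, ENNReal.ofReal (w y) ∂μ).toReal))⁻¹ *
      ∫⁻ y in ball c r, g y ^ p * ENNReal.ofReal (w y) ∂μ) ^ (1 / p)

/-- An RD-space: a space of homogeneous type whose (regular Borel) measure is
doubling (with upper dimension `n = log₂ C₁`) and reverse doubling with exponent
`κ ≤ n`; we also assume `μ(X) = ∞` throughout (which, together with the
finiteness of the measure of balls, forces `diam X = ∞`, so the reverse doubling
condition is stated for all radii and all `λ ≥ 1`). -/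
structure IsRDSpace (μ : Measure X) (κ n : ℝ) : Prop where
  regular : μ.Regular
  ball_pos : ∀ (x : X) (r : ℝ), 0 < r → 0 < μ (ball x r)
  ball_lt_top : ∀ (x : X) (r : ℝ), 0 < r → μ (ball x r) < ⊤
  kappa_pos : 0 < κ
  kappa_le_n : κ ≤ n
  doubling : ∃ C₁ : ℝ, 1 ≤ C₁ ∧ n = Real.logb 2 C₁ ∧
    ∀ (x : X) (r : ℝ), 0 < r → μ (ball x (2 * r)) ≤ ENNReal.ofReal C₁ * μ (ball x r)
  reverse_doubling : ∃ C₂ : ℝ, 0 < C₂ ∧ C₂ ≤ 1 ∧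
    ∀ (x : X) (r lam : ℝ), 0 < r → 1 ≤ lam →
      ENNReal.ofReal (C₂ * lam ^ κ) * μ (ball x r) ≤ μ (ball x (lam * r))
  measure_univ_eq_top : μ Set.univ = ⊤

/-- There is a positive nondecreasing function `Φ` on `[0,∞)` with
`μ(B(x,r)) ≍ Φ(r)` uniformly in `x` and `r > 0`. -/
def HasMeasureFunction (μ : Measure X) : Prop :=
  ∃ Φ : ℝ → ℝ, (∀ r : ℝ, 0 < r → 0 < Φ r) ∧ MonotoneOn Φ (Set.Ici (0 : ℝ)) ∧
    ∃ c₁ c₂ : ℝ, 0 < c₁ ∧ 0 < c₂ ∧ ∀ (x : X) (r : ℝ), 0 < r →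
      ENNReal.ofReal (c₁ * Φ r) ≤ μ (ball x r) ∧ μ (ball x r) ≤ ENNReal.ofReal (c₂ * Φ r)

/-- `ρ(ȳ, x̄) = max_{1 ≤ j ≤ m} d(y_j, x)`. -/
def rho {m : ℕ} (x : X) (y : Fin m → X) : ℝ := ⨆ j, dist (y j) x

/-- A strongly singular generalized kernel on an RD-space with parameters
`(m, ε, α, p₀)` (`p₀'` the conjugate exponent of `p₀`, RD-parameters `κ ≤ n`). -/
def IsSSGKernel (μ : Measure X) (m : ℕ) (κ n ε α p₀ p₀' : ℝ)
    (K : X → (Fin m → X) → ℝ) : Prop :=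
  LocallyIntegrableOn (fun z : X × (Fin m → X) => K z.1 z.2)
    {z : X × (Fin m → X) | ¬ ∀ j, z.2 j = z.1} (μ.prod (Measure.pi fun _ : Fin m => μ)) ∧
  ∃ C_K : ℝ, 0 < C_K ∧ ∀ x x' : X, x ≠ x' → ∀ k : ℕ, 1 ≤ k →
    (∫⁻ y in {y : Fin m → X |
        2 ^ k * dist x x' ^ (if 1 ≤ dist x x' then (1 : ℝ) else α) ≤ rho x y ∧
        rho x y ≤ 2 ^ (k + 1) * dist x x' ^ (if 1 ≤ dist x x' then (1 : ℝ) else α)},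
      ENNReal.ofReal (|K x y - K x' y| ^ p₀) ∂(Measure.pi fun _ : Fin m => μ)) ^ (1 / p₀)
    ≤ ENNReal.ofReal (C_K *
        dist x x' ^ (ε - (if 1 ≤ dist x x' then (1 : ℝ) else α) *
          ((if 1 ≤ dist x x' then n else κ) * m / p₀' + ε / α)) *
        2 ^ (-(k : ℝ) * (n * m / p₀' + ε / α)))

/-- An `m`-linear strongly singular integral operator with generalized kernel
(`m`-GSSIO) on an RD-space. -/
structure IsGSSIO (μ : Measure X) (m : ℕ) (κ n ε α p₀ p₀' q : ℝ)
    (r l : Fin m → ℝ) (T : (Fin m → X → ℝ) → X → ℝ) : Prop where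
  m_pos : 0 < m
  eps_pos : 0 < ε
  alpha_pos : 0 < α
  alpha_le_one : α ≤ 1
  p0_gt_one : 1 < p₀
  p0_conj : 1 / p₀ + 1 / p₀' = 1
  kernel : ∃ K : X → (Fin m → X) → ℝ, IsSSGKernel μ m κ n ε α p₀ p₀' K ∧
    ∀ f : Fin m → X → ℝ,
      (∀ j, ∃ L : ℝ≥0, LipschitzWith L (f j)) →
      (∀ j, IsBounded (tsupport (f j))) →
      ∀ x, x ∉ ⋂ j, tsupport (f j) →
        T f x = ∫ y : Fin m → X, K x y * ∏ j, f j (y j) ∂(Measure.pi fun _ : Fin m => μ)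
  r_ge_one : ∀ j, 1 ≤ r j
  weak_r : ∃ C : ℝ, 0 < C ∧ ∀ f : Fin m → X → ℝ, (∀ j, Measurable (f j)) →
    weakLpNormW μ (∑ j, 1 / r j)⁻¹ (fun _ => 1) (T f) ≤
      ENNReal.ofReal C * ∏ j, lpNormW μ (r j) (fun _ => 1) (f j)
  l_ge_one : ∀ j, 1 ≤ l j
  lq_pos : 0 < (∑ j, 1 / l j)⁻¹ / q
  lq_le : (∑ j, 1 / l j)⁻¹ / q ≤ α * κ / n
  weak_l : ∃ C : ℝ, 0 < C ∧ ∀ f : Fin m → X → ℝ, (∀ j, Measurable (f j)) →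
    weakLpNormW μ q (fun _ => 1) (T f) ≤
      ENNReal.ofReal C * ∏ j, lpNormW μ (l j) (fun _ => 1) (f j)

end Defs

/-- Kernel estimate (small distance case, from the proof of Theorem 2.1):
for a strongly singular generalized kernel `K`, if `0 < d(z,u₀) < 1` and
`d(x,u₀) ≤ 2 d(z,u₀)^α`, then
`∫_{ρ(ȳ,ū₀) ≥ 2 d(z,u₀)^α} |K(z,ȳ) − K(u₀,ȳ)| ∏ |f_j(y_j)| dμ⃗(ȳ)
  ≤ C 𝓜_{p₀'}(f⃗)(x)`. -/
theorem kernel_estimate_near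
    {X : Type*} [MetricSpace X] [MeasurableSpace X] [BorelSpace X]
    (μ : Measure X) (κ n : ℝ) (hRD : IsRDSpace μ κ n) (hΦ : HasMeasureFunction μ)
    (m : ℕ) (hm : 0 < m) (ε α p₀ p₀' : ℝ)
    (hε : 0 < ε) (hα0 : 0 < α) (hα1 : α ≤ 1)
    (hp₀ : 1 < p₀) (hconj : 1 / p₀ + 1 / p₀' = 1)
    (K : X → (Fin m → X) → ℝ) (hK : IsSSGKernel μ m κ n ε α p₀ p₀' K) :
    ∃ C : ℝ, 0 < C ∧ ∀ z u₀ x : X, 0 < dist z u₀ → dist z u₀ < 1 →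
      dist x u₀ ≤ 2 * dist z u₀ ^ α →
      ∀ f : Fin m → X → ℝ,
        (∀ j, Measurable (f j)) →
        (∀ j, ∀ (c : X) (rad : ℝ), 0 < rad →
          ∫⁻ y in ball c rad, ENNReal.ofReal (|f j y| ^ p₀') ∂μ < ⊤) →
        (∫⁻ y in {y : Fin m → X | 2 * dist z u₀ ^ α ≤ rho u₀ y},
            ENNReal.ofReal |K z y - K u₀ y| * ∏ j, ENNReal.ofReal |f j (y j)|
              ∂(Measure.pi fun _ : Fin m => μ))
          ≤ ENNReal.ofReal C * multiMaximalPow μ p₀' f x := by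
    classical
  obtain ⟨hKloc, C_K, hCK, hKest⟩ := hK
  obtain ⟨Φ, hΦpos, hΦmono, c₁, c₂, hc₁, hc₂, hΦbd⟩ := hΦ
  obtain ⟨C₁, hC₁, hn, hdb⟩ := hRD.doubling
  obtain ⟨C₂, hC₂0, hC₂1, hrd⟩ := hRD.reverse_doubling
  have hC₁0 : (0:ℝ) < C₁ := zero_lt_one.trans_le hC₁
  have hC₁eq : (2:ℝ) ^ n = C₁ := by
    rw [hn]; exact Real.rpow_logb two_pos (by norm_num) hC₁0
  have hp₀0 : (0:ℝ) < p₀ := zero_lt_one.trans hp₀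
  have hp₀'inv : 0 < 1 / p₀' := by
    have h1 : 1 / p₀ < 1 := by rw [div_lt_one hp₀0]; exact hp₀
    linarith
  have hp₀'0 : (0:ℝ) < p₀' := by
    rcases lt_trichotomy p₀' 0 with h | h | h
    · exfalso
      have : 1 / p₀' < 0 := div_neg_of_pos_of_neg one_pos h
      linarith
    · exfalso; rw [h] at hp₀'inv; simp at hp₀'inv
    · exact h
  have hpq : Real.HolderConjugate p₀ p₀' := Real.holderConjugate_iff.mpr ⟨hp₀, by rw [← one_div, ← one_div]; exact hconj⟩
  set θ : ℝ := (m:ℝ) / p₀' with hθdef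
  have hθ0 : 0 < θ := div_pos (by exact_mod_cast hm) hp₀'0
  have hΦ10 : 0 < Φ 1 := hΦpos 1 one_pos
  set A₀ : ℝ := c₂ * Φ 1 / C₂ with hA₀def
  have hA₀ : 0 < A₀ := div_pos (mul_pos hc₂ hΦ10) hC₂0
  set rσ : ℝ := (2:ℝ) ^ (-(ε/α)) with hrσdef
  have hrσ0 : 0 < rσ := Real.rpow_pos_of_pos two_pos _
  have hrσ1 : rσ < 1 := Real.rpow_lt_one_of_one_lt_of_neg one_lt_two (by
    have : 0 < ε / α := div_pos hε hα0
    linarith)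
  set Cb : ℝ := C_K * (A₀ ^ θ * (2:ℝ) ^ (2 * (n * θ))) with hCbdef
  have hCb : 0 < Cb :=
    mul_pos hCK (mul_pos (Real.rpow_pos_of_pos hA₀ _) (Real.rpow_pos_of_pos two_pos _))
  have hr1 : 0 < 1 - rσ := by linarith
  refine ⟨Cb * (1 - rσ)⁻¹, mul_pos hCb (inv_pos.mpr hr1), ?_⟩
  intro z u₀ x hd0 hd1 hx f hfm _hfloc
  haveI : SigmaFinite μ := by
    have hXne : Nonempty X := by
      by_contra h
      rw [not_nonempty_iff] at h
      have h2 := hRD.measure_univ_eq_top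
      rw [Set.univ_eq_empty_iff.mpr h] at h2
      simp at h2
    obtain ⟨x₀⟩ := hXne
    refine ⟨⟨⟨fun k => ball x₀ (k + 1), fun _ => trivial,
      fun k => hRD.ball_lt_top x₀ (k + 1) (by positivity), ?_⟩⟩⟩
    rw [iUnion_eq_univ_iff]
    intro p
    exact ⟨⌈dist p x₀⌉₊, mem_ball.mpr (lt_of_le_of_lt (Nat.le_ceil _) (lt_add_one _))⟩
  have hzu : z ≠ u₀ := dist_pos.mp hd0
  have hne : u₀ ≠ z := hzu.symm
  set d : ℝ := dist z u₀ with hddef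
  have hD0 : 0 < d ^ α := Real.rpow_pos_of_pos hd0 α
  have hD1 : d ^ α < 1 := Real.rpow_lt_one hd0.le hd1 hα0
  set A : ℕ → Set (Fin m → X) := fun k =>
    {y | 2 ^ k * d ^ α ≤ rho u₀ y ∧ rho u₀ y ≤ 2 ^ (k + 1) * d ^ α} with hAdef
  -- covering
  have hcover : {y : Fin m → X | 2 * d ^ α ≤ rho u₀ y} ⊆ ⋃ k : ℕ, A (k + 1) := by
    intro y hy
    simp only [mem_setOf_eq] at hy
    have hex : ∃ k : ℕ, rho u₀ y < 2 ^ (k + 2) * d ^ α := by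
      obtain ⟨k, hk⟩ := pow_unbounded_of_one_lt (rho u₀ y / d ^ α) one_lt_two
      refine ⟨k, ?_⟩
      rw [div_lt_iff₀ hD0] at hk
      calc rho u₀ y < 2 ^ k * d ^ α := by linarith [hk]
        _ ≤ 2 ^ (k + 2) * d ^ α := by
            have : (2:ℝ) ^ k ≤ 2 ^ (k + 2) := pow_le_pow_right₀ one_le_two (by omega)
            nlinarith [hD0]
    have hk2 : rho u₀ y < 2 ^ (Nat.find hex + 2) * d ^ α := Nat.find_spec hex
    have hk1 : 2 ^ (Nat.find hex + 1) * d ^ α ≤ rho u₀ y := by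
      rcases Nat.eq_zero_or_pos (Nat.find hex) with h | h
      · rw [h]
        simpa [pow_one] using hy
      · have hmin := Nat.find_min hex (show Nat.find hex - 1 < Nat.find hex by omega)
        have heq : Nat.find hex - 1 + 2 = Nat.find hex + 1 := by omega
        rw [heq] at hmin
        exact not_lt.mp hmin
    exact mem_iUnion.mpr ⟨Nat.find hex, hk1, hk2.le⟩
  -- doubling iteration
  have hiter : ∀ (c : X) (j : ℕ) (r : ℝ), 0 < r →
      μ (ball c (2 ^ j * r)) ≤ ENNReal.ofReal (C₁ ^ j) * μ (ball c r) := by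
    intro c j
    induction j with
    | zero => intro r hr; simp
    | succ j ih =>
      intro r hr
      have h1 : (2:ℝ) ^ (j + 1) * r = 2 * (2 ^ j * r) := by ring
      rw [h1]
      calc μ (ball c (2 * (2 ^ j * r))) ≤ ENNReal.ofReal C₁ * μ (ball c (2 ^ j * r)) :=
            hdb c (2 ^ j * r) (by positivity)
        _ ≤ ENNReal.ofReal C₁ * (ENNReal.ofReal (C₁ ^ j) * μ (ball c r)) :=
            mul_le_mul_right (ih r hr) _
        _ = ENNReal.ofReal (C₁ ^ (j + 1)) * μ (ball c r) := by
            rw [← mul_assoc, ← ENNReal.ofReal_mul hC₁0.le]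
            congr 2
            rw [pow_succ]
            ring
  -- small ball bound
  have hsmall : μ (ball u₀ (d ^ α)) ≤ ENNReal.ofReal (A₀ * (d ^ α) ^ κ) := by
    have hinv1 : 1 ≤ (d ^ α)⁻¹ := (one_le_inv₀ hD0).mpr hD1.le
    have h1 := hrd u₀ (d ^ α) ((d ^ α)⁻¹) hD0 hinv1
    rw [inv_mul_cancel₀ hD0.ne'] at h1
    have h2 : μ (ball u₀ 1) ≤ ENNReal.ofReal (c₂ * Φ 1) := (hΦbd u₀ 1 one_pos).2
    have hpos : 0 < C₂ * ((d ^ α)⁻¹) ^ κ :=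
      mul_pos hC₂0 (Real.rpow_pos_of_pos (inv_pos.mpr hD0) κ)
    have ha0 : ENNReal.ofReal (C₂ * ((d ^ α)⁻¹) ^ κ) ≠ 0 := by
      simp only [ne_eq, ENNReal.ofReal_eq_zero, not_le]
      exact hpos
    have hat : ENNReal.ofReal (C₂ * ((d ^ α)⁻¹) ^ κ) ≠ ⊤ := ENNReal.ofReal_ne_top
    calc μ (ball u₀ (d ^ α))
        = (ENNReal.ofReal (C₂ * ((d ^ α)⁻¹) ^ κ))⁻¹ *
            (ENNReal.ofReal (C₂ * ((d ^ α)⁻¹) ^ κ) * μ (ball u₀ (d ^ α))) := by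
          rw [← mul_assoc, ENNReal.inv_mul_cancel ha0 hat, one_mul]
      _ ≤ (ENNReal.ofReal (C₂ * ((d ^ α)⁻¹) ^ κ))⁻¹ * ENNReal.ofReal (c₂ * Φ 1) :=
          mul_le_mul_right (h1.trans h2) _
      _ = ENNReal.ofReal ((C₂ * ((d ^ α)⁻¹) ^ κ)⁻¹ * (c₂ * Φ 1)) := by
          rw [ENNReal.ofReal_mul (inv_nonneg.mpr hpos.le), ENNReal.ofReal_inv_of_pos hpos]
      _ = ENNReal.ofReal (A₀ * (d ^ α) ^ κ) := by
          congr 1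
          rw [Real.inv_rpow hD0.le, hA₀def]
          have hκ0 : (0:ℝ) < (d ^ α) ^ κ := Real.rpow_pos_of_pos hD0 κ
          field_simp
  -- per-annulus estimate
  have hannulus : ∀ k' : ℕ,
      (∫⁻ y in A (k' + 1), ENNReal.ofReal |K z y - K u₀ y| * ∏ j, ENNReal.ofReal |f j (y j)|
          ∂(Measure.pi fun _ : Fin m => μ))
        ≤ ENNReal.ofReal (Cb * rσ ^ (k' + 1)) * multiMaximalPow μ p₀' f x := by
    intro k'
    set k := k' + 1 with hkdef
    have hk1 : 1 ≤ k := Nat.le_add_left 1 k'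
    have hR0 : (0:ℝ) < 2 ^ (k + 2) * d ^ α := by positivity
    have h2R : 2 * d ^ α < 2 ^ (k + 2) * d ^ α := by
      have h2 : (2:ℝ) < 2 ^ (k + 2) := by
        calc (2:ℝ) = 2 ^ 1 := (pow_one 2).symm
          _ < 2 ^ (k + 2) := pow_lt_pow_right₀ one_lt_two (by omega)
      nlinarith [hD0]
    have hxB : x ∈ ball u₀ (2 ^ (k + 2) * d ^ α) := mem_ball.mpr (lt_of_le_of_lt hx h2R)
    have hμB0 : μ (ball u₀ (2 ^ (k + 2) * d ^ α)) ≠ 0 := (hRD.ball_pos u₀ _ hR0).ne'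
    have hμBt : μ (ball u₀ (2 ^ (k + 2) * d ^ α)) ≠ ⊤ := (hRD.ball_lt_top u₀ _ hR0).ne
    set G : (Fin m → X) → ℝ≥0∞ := fun y => ∏ j, ENNReal.ofReal |f j (y j)| with hGdef
    have hGm : Measurable G :=
      Finset.measurable_prod _ fun j _ =>
        ENNReal.measurable_ofReal.comp ((hfm j).comp (measurable_pi_apply j)).abs
    have hGt : ∀ y, G y ≠ ⊤ := fun y =>
      (ENNReal.prod_lt_top fun j _ => ENNReal.ofReal_lt_top).ne
    -- Hölder
    have hH : (∫⁻ y in A k, ENNReal.ofReal |K z y - K u₀ y| * G y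
          ∂(Measure.pi fun _ : Fin m => μ))
        ≤ (∫⁻ y in A k, ENNReal.ofReal |K z y - K u₀ y| ^ p₀
              ∂(Measure.pi fun _ : Fin m => μ)) ^ (1 / p₀) *
          (∫⁻ y in A k, G y ^ p₀' ∂(Measure.pi fun _ : Fin m => μ)) ^ (1 / p₀') :=
      holder_one_side _ hpq (fun y => ENNReal.ofReal |K z y - K u₀ y|) G hGm hGt
    -- kernel factor
    have hker : (∫⁻ y in A k, ENNReal.ofReal |K z y - K u₀ y| ^ p₀
          ∂(Measure.pi fun _ : Fin m => μ)) ^ (1 / p₀)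
        ≤ ENNReal.ofReal (C_K * d ^ (ε - α * (κ * ↑m / p₀' + ε / α)) *
            2 ^ (-(k:ℝ) * (n * ↑m / p₀' + ε / α))) := by
      have h := hKest u₀ z hne k hk1
      rw [show dist u₀ z = d from dist_comm u₀ z] at h
      simp only [if_neg (not_le.mpr hd1)] at h
      have hseteq :
          {y : Fin m → X | 2 ^ k * d ^ α ≤ rho u₀ y ∧ rho u₀ y ≤ 2 ^ (k + 1) * d ^ α} = A k := by
        rw [hAdef]
      rw [hseteq] at h
      have hcongr : ∀ y : Fin m → X,
          ENNReal.ofReal |K z y - K u₀ y| ^ p₀ = ENNReal.ofReal (|K u₀ y - K z y| ^ p₀) := by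
        intro y
        rw [abs_sub_comm (K z y) (K u₀ y)]
        exact ENNReal.ofReal_rpow_of_nonneg (abs_nonneg _) hp₀0.le
      calc (∫⁻ y in A k, ENNReal.ofReal |K z y - K u₀ y| ^ p₀
            ∂(Measure.pi fun _ : Fin m => μ)) ^ (1 / p₀)
          = (∫⁻ y in A k, ENNReal.ofReal (|K u₀ y - K z y| ^ p₀)
              ∂(Measure.pi fun _ : Fin m => μ)) ^ (1 / p₀) := by
            rw [lintegral_congr hcongr]
        _ ≤ _ := h
    -- G factor
    have hsub : A k ⊆ univ.pi (fun _ : Fin m => ball u₀ (2 ^ (k + 2) * d ^ α)) := by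
      intro y hy j _
      have h1 : dist (y j) u₀ ≤ rho u₀ y := by
        unfold rho
        exact le_ciSup (f := fun i => dist (y i) u₀)
          (Set.Finite.bddAbove (Set.finite_range _)) j
      have h2 : rho u₀ y ≤ 2 ^ (k + 1) * d ^ α := hy.2
      have h3 : (2:ℝ) ^ (k + 1) * d ^ α < 2 ^ (k + 2) * d ^ α := by
        have : (2:ℝ) ^ (k + 1) < 2 ^ (k + 2) := pow_lt_pow_right₀ one_lt_two (by omega)
        nlinarith [hD0]
      exact mem_ball.mpr (lt_of_le_of_lt (h1.trans h2) h3)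
    have hstep1 : (∫⁻ y in A k, G y ^ p₀' ∂(Measure.pi fun _ : Fin m => μ))
        ≤ ∏ j, ∫⁻ t in ball u₀ (2 ^ (k + 2) * d ^ α), ENNReal.ofReal (|f j t| ^ p₀') ∂μ := by
      calc ∫⁻ y in A k, G y ^ p₀' ∂(Measure.pi fun _ : Fin m => μ)
          = ∫⁻ y in A k, ∏ j, ENNReal.ofReal (|f j (y j)| ^ p₀')
              ∂(Measure.pi fun _ : Fin m => μ) := by
            refine lintegral_congr fun y => ?_
            rw [hGdef]
            rw [← ENNReal.prod_rpow_of_nonneg hp₀'0.le]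
            exact Finset.prod_congr rfl fun j _ =>
              ENNReal.ofReal_rpow_of_nonneg (abs_nonneg _) hp₀'0.le
        _ ≤ ∫⁻ y in univ.pi (fun _ : Fin m => ball u₀ (2 ^ (k + 2) * d ^ α)),
              ∏ j, ENNReal.ofReal (|f j (y j)| ^ p₀') ∂(Measure.pi fun _ : Fin m => μ) :=
            lintegral_mono_set hsub
        _ = ∫⁻ y, ∏ j, ((ball u₀ (2 ^ (k + 2) * d ^ α)).indicator
              (fun t => ENNReal.ofReal (|f j t| ^ p₀'))) (y j)
              ∂(Measure.pi fun _ : Fin m => μ) := by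
            rw [← lintegral_indicator (MeasurableSet.univ_pi fun _ => measurableSet_ball)]
            refine lintegral_congr fun y => ?_
            by_cases hyS : y ∈ univ.pi (fun _ : Fin m => ball u₀ (2 ^ (k + 2) * d ^ α))
            · rw [indicator_of_mem hyS]
              exact Finset.prod_congr rfl fun j _ =>
                (Set.indicator_of_mem (s := ball u₀ (2 ^ (k + 2) * d ^ α))
                  (hyS j (mem_univ j)) (fun t => ENNReal.ofReal (|f j t| ^ p₀'))).symm
            · rw [indicator_of_notMem hyS]
              rw [Set.mem_univ_pi] at hyS
              push_neg at hyS
              obtain ⟨j, hj⟩ := hyS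
              exact (Finset.prod_eq_zero (Finset.mem_univ j)
                (indicator_of_notMem hj _)).symm
        _ = ∏ j, ∫⁻ t in ball u₀ (2 ^ (k + 2) * d ^ α), ENNReal.ofReal (|f j t| ^ p₀') ∂μ := by
            rw [lintegral_pi_prod μ m (fun j =>
              (ball u₀ (2 ^ (k + 2) * d ^ α)).indicator
                (fun t => ENNReal.ofReal (|f j t| ^ p₀')))
              (fun j => Measurable.indicator
                (ENNReal.measurable_ofReal.comp ((hfm j).abs.pow measurable_const))
                measurableSet_ball)]
            exact Finset.prod_congr rfl fun j _ =>
              lintegral_indicator measurableSet_ball _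
    have hstep2 : (∏ j, ∫⁻ t in ball u₀ (2 ^ (k + 2) * d ^ α),
          ENNReal.ofReal (|f j t| ^ p₀') ∂μ)
        ≤ μ (ball u₀ (2 ^ (k + 2) * d ^ α)) ^ m *
            multiMaximal μ (fun j y => |f j y| ^ p₀') x := by
      have hid : ∀ j : Fin m, (∫⁻ t in ball u₀ (2 ^ (k + 2) * d ^ α),
            ENNReal.ofReal (|f j t| ^ p₀') ∂μ)
          = μ (ball u₀ (2 ^ (k + 2) * d ^ α)) *
            ((μ (ball u₀ (2 ^ (k + 2) * d ^ α)))⁻¹ *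
              ∫⁻ t in ball u₀ (2 ^ (k + 2) * d ^ α), ENNReal.ofReal (|f j t| ^ p₀') ∂μ) := by
        intro j
        rw [← mul_assoc, ENNReal.mul_inv_cancel hμB0 hμBt, one_mul]
      calc (∏ j, ∫⁻ t in ball u₀ (2 ^ (k + 2) * d ^ α), ENNReal.ofReal (|f j t| ^ p₀') ∂μ)
          = ∏ j : Fin m, (μ (ball u₀ (2 ^ (k + 2) * d ^ α)) *
              ((μ (ball u₀ (2 ^ (k + 2) * d ^ α)))⁻¹ *
                ∫⁻ t in ball u₀ (2 ^ (k + 2) * d ^ α), ENNReal.ofReal (|f j t| ^ p₀') ∂μ)) :=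
            Finset.prod_congr rfl fun j _ => hid j
        _ = μ (ball u₀ (2 ^ (k + 2) * d ^ α)) ^ m *
            ∏ j : Fin m, ((μ (ball u₀ (2 ^ (k + 2) * d ^ α)))⁻¹ *
              ∫⁻ t in ball u₀ (2 ^ (k + 2) * d ^ α), ENNReal.ofReal (|f j t| ^ p₀') ∂μ) := by
            rw [Finset.prod_mul_distrib, Finset.prod_const, Finset.card_univ, Fintype.card_fin]
        _ ≤ μ (ball u₀ (2 ^ (k + 2) * d ^ α)) ^ m *
            multiMaximal μ (fun j y => |f j y| ^ p₀') x := by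
            refine mul_le_mul_right ?_ _
            have heq : ∏ j : Fin m, ((μ (ball u₀ (2 ^ (k + 2) * d ^ α)))⁻¹ *
                  ∫⁻ t in ball u₀ (2 ^ (k + 2) * d ^ α), ENNReal.ofReal (|f j t| ^ p₀') ∂μ)
                = ∏ j : Fin m, ((μ (ball u₀ (2 ^ (k + 2) * d ^ α)))⁻¹ *
                  ∫⁻ t in ball u₀ (2 ^ (k + 2) * d ^ α), ENNReal.ofReal |(|f j t| ^ p₀')| ∂μ) := by
              refine Finset.prod_congr rfl fun j _ => ?_
              congr 1
              refine lintegral_congr fun t => ?_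
              rw [abs_of_nonneg (Real.rpow_nonneg (abs_nonneg _) _)]
            rw [heq, multiMaximal]
            exact le_iSup_of_le u₀ (le_iSup_of_le (2 ^ (k + 2) * d ^ α)
              (le_iSup_of_le hR0 (le_iSup_of_le hxB le_rfl)))
    have hμB : μ (ball u₀ (2 ^ (k + 2) * d ^ α))
        ≤ ENNReal.ofReal (A₀ * C₁ ^ (k + 2) * (d ^ α) ^ κ) := by
      calc μ (ball u₀ (2 ^ (k + 2) * d ^ α))
          ≤ ENNReal.ofReal (C₁ ^ (k + 2)) * μ (ball u₀ (d ^ α)) := hiter u₀ (k + 2) (d ^ α) hD0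
        _ ≤ ENNReal.ofReal (C₁ ^ (k + 2)) * ENNReal.ofReal (A₀ * (d ^ α) ^ κ) :=
            mul_le_mul_right hsmall _
        _ = ENNReal.ofReal (A₀ * C₁ ^ (k + 2) * (d ^ α) ^ κ) := by
            rw [← ENNReal.ofReal_mul (by positivity)]
            congr 1
            ring
    have ht0 : (0:ℝ) ≤ A₀ * C₁ ^ (k + 2) * (d ^ α) ^ κ := by positivity
    have hG2 : (∫⁻ y in A k, G y ^ p₀' ∂(Measure.pi fun _ : Fin m => μ)) ^ (1 / p₀')
        ≤ ENNReal.ofReal ((A₀ * C₁ ^ (k + 2) * (d ^ α) ^ κ) ^ θ) *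
            multiMaximalPow μ p₀' f x := by
      calc (∫⁻ y in A k, G y ^ p₀' ∂(Measure.pi fun _ : Fin m => μ)) ^ (1 / p₀')
          ≤ (μ (ball u₀ (2 ^ (k + 2) * d ^ α)) ^ m *
              multiMaximal μ (fun j y => |f j y| ^ p₀') x) ^ (1 / p₀') :=
            ENNReal.rpow_le_rpow (hstep1.trans hstep2) hp₀'inv.le
        _ = (μ (ball u₀ (2 ^ (k + 2) * d ^ α)) ^ m) ^ (1 / p₀') * multiMaximalPow μ p₀' f x := by
            rw [ENNReal.mul_rpow_of_nonneg _ _ hp₀'inv.le, multiMaximalPow]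
        _ ≤ (ENNReal.ofReal (A₀ * C₁ ^ (k + 2) * (d ^ α) ^ κ) ^ m) ^ (1 / p₀') *
              multiMaximalPow μ p₀' f x := by
            refine mul_le_mul_left (ENNReal.rpow_le_rpow (pow_le_pow_left' hμB m)
              hp₀'inv.le) _
        _ = ENNReal.ofReal ((A₀ * C₁ ^ (k + 2) * (d ^ α) ^ κ) ^ θ) *
              multiMaximalPow μ p₀' f x := by
            congr 1
            rw [← ENNReal.ofReal_pow ht0,
              ENNReal.ofReal_rpow_of_nonneg (by positivity) hp₀'inv.le]
            congr 1
            rw [← Real.rpow_natCast (A₀ * C₁ ^ (k + 2) * (d ^ α) ^ κ) m,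
              ← Real.rpow_mul ht0, hθdef, mul_one_div]
    -- coefficient identity
    have hcoef : C_K * d ^ (ε - α * (κ * ↑m / p₀' + ε / α)) *
          2 ^ (-(k:ℝ) * (n * ↑m / p₀' + ε / α)) * (A₀ * C₁ ^ (k + 2) * (d ^ α) ^ κ) ^ θ
        = Cb * rσ ^ k := by
      have e2 : (C₁:ℝ) ^ (k + 2) = (2:ℝ) ^ (n * ((k:ℝ) + 2)) := by
        rw [← hC₁eq, ← Real.rpow_natCast ((2:ℝ) ^ n) (k + 2), ← Real.rpow_mul two_pos.le]
        congr 1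
        push_cast
        ring
      have e3 : ((d ^ α) ^ κ) = d ^ (α * κ) := (Real.rpow_mul hd0.le α κ).symm
      have e4 : rσ ^ k = (2:ℝ) ^ ((-(ε / α)) * (k:ℝ)) := by
        rw [hrσdef, ← Real.rpow_natCast ((2:ℝ) ^ (-(ε / α))) k, ← Real.rpow_mul two_pos.le]
      rw [e2, e3]
      rw [Real.mul_rpow (by positivity) (by positivity),
        Real.mul_rpow hA₀.le (by positivity)]
      rw [← Real.rpow_mul two_pos.le, ← Real.rpow_mul hd0.le]
      rw [hCbdef, e4]
      rw [show C_K * d ^ (ε - α * (κ * ↑m / p₀' + ε / α)) *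
            2 ^ (-(k:ℝ) * (n * ↑m / p₀' + ε / α)) *
            (A₀ ^ θ * 2 ^ (n * ((k:ℝ) + 2) * θ) * d ^ (α * κ * θ))
          = C_K * A₀ ^ θ *
            (d ^ (ε - α * (κ * ↑m / p₀' + ε / α)) * d ^ (α * κ * θ)) *
            (2 ^ (-(k:ℝ) * (n * ↑m / p₀' + ε / α)) * 2 ^ (n * ((k:ℝ) + 2) * θ)) from by ring]
      rw [← Real.rpow_add hd0, ← Real.rpow_add two_pos]
      rw [show ε - α * (κ * ↑m / p₀' + ε / α) + α * κ * θ = 0 from by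
        rw [hθdef]; field_simp; ring]
      rw [show -(k:ℝ) * (n * ↑m / p₀' + ε / α) + n * ((k:ℝ) + 2) * θ
          = 2 * (n * θ) + (-(ε / α)) * (k:ℝ) from by
        rw [hθdef]; field_simp; ring]
      rw [Real.rpow_zero, Real.rpow_add two_pos]
      ring
    -- combine
    calc (∫⁻ y in A k, ENNReal.ofReal |K z y - K u₀ y| * ∏ j, ENNReal.ofReal |f j (y j)|
            ∂(Measure.pi fun _ : Fin m => μ))
        ≤ (∫⁻ y in A k, ENNReal.ofReal |K z y - K u₀ y| ^ p₀
              ∂(Measure.pi fun _ : Fin m => μ)) ^ (1 / p₀) *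
          (∫⁻ y in A k, G y ^ p₀' ∂(Measure.pi fun _ : Fin m => μ)) ^ (1 / p₀') := hH
      _ ≤ ENNReal.ofReal (C_K * d ^ (ε - α * (κ * ↑m / p₀' + ε / α)) *
              2 ^ (-(k:ℝ) * (n * ↑m / p₀' + ε / α))) *
          (ENNReal.ofReal ((A₀ * C₁ ^ (k + 2) * (d ^ α) ^ κ) ^ θ) *
            multiMaximalPow μ p₀' f x) := mul_le_mul' hker hG2
      _ = ENNReal.ofReal (C_K * d ^ (ε - α * (κ * ↑m / p₀' + ε / α)) *
              2 ^ (-(k:ℝ) * (n * ↑m / p₀' + ε / α)) *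
              (A₀ * C₁ ^ (k + 2) * (d ^ α) ^ κ) ^ θ) * multiMaximalPow μ p₀' f x := by
          rw [← mul_assoc, ← ENNReal.ofReal_mul (by positivity)]
      _ = ENNReal.ofReal (Cb * rσ ^ k) * multiMaximalPow μ p₀' f x := by rw [hcoef]
  -- summation
  calc (∫⁻ y in {y : Fin m → X | 2 * d ^ α ≤ rho u₀ y},
          ENNReal.ofReal |K z y - K u₀ y| * ∏ j, ENNReal.ofReal |f j (y j)|
          ∂(Measure.pi fun _ : Fin m => μ))
      ≤ ∫⁻ y in ⋃ k : ℕ, A (k + 1),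
          ENNReal.ofReal |K z y - K u₀ y| * ∏ j, ENNReal.ofReal |f j (y j)|
          ∂(Measure.pi fun _ : Fin m => μ) := lintegral_mono_set hcover
    _ ≤ ∑' k : ℕ, ∫⁻ y in A (k + 1),
          ENNReal.ofReal |K z y - K u₀ y| * ∏ j, ENNReal.ofReal |f j (y j)|
          ∂(Measure.pi fun _ : Fin m => μ) := lintegral_iUnion_le _ _
    _ ≤ ∑' k : ℕ, ENNReal.ofReal (Cb * rσ ^ (k + 1)) * multiMaximalPow μ p₀' f x :=
        ENNReal.tsum_le_tsum hannulus
    _ = (∑' k : ℕ, ENNReal.ofReal (Cb * rσ ^ (k + 1))) * multiMaximalPow μ p₀' f x :=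
        ENNReal.tsum_mul_right
    _ ≤ ENNReal.ofReal (Cb * (1 - rσ)⁻¹) * multiMaximalPow μ p₀' f x := by
        refine mul_le_mul_left ?_ _
        calc ∑' k : ℕ, ENNReal.ofReal (Cb * rσ ^ (k + 1))
            ≤ ∑' k : ℕ, ENNReal.ofReal Cb * ENNReal.ofReal rσ ^ k := by
              refine ENNReal.tsum_le_tsum fun k => ?_
              rw [ENNReal.ofReal_mul hCb.le, ENNReal.ofReal_pow hrσ0.le]
              exact mul_le_mul_right
                (pow_le_pow_of_le_one (zero_le) (ENNReal.ofReal_le_one.mpr hrσ1.le)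
                  (Nat.le_succ k)) _
          _ = ENNReal.ofReal Cb * ∑' k : ℕ, ENNReal.ofReal rσ ^ k := ENNReal.tsum_mul_left
          _ = ENNReal.ofReal Cb * (1 - ENNReal.ofReal rσ)⁻¹ := by rw [ENNReal.tsum_geometric]
          _ = ENNReal.ofReal (Cb * (1 - rσ)⁻¹) := by
              rw [ENNReal.ofReal_mul hCb.le]
              congr 1
              rw [ENNReal.ofReal_inv_of_pos hr1, ENNReal.ofReal_sub 1 hrσ0.le,
                ENNReal.ofReal_one]
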